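/- arXiv:2502.08868 — 6 statements merged into one kernel-verified Lean document; each statement's English description precedes it below -/
import Mathlib

section
/- Let n = a + b + c where a, b, c are positive integers that are not all equal. Let A = {1,...,a}, B = {a+1,...,a+b}, C = {a+b+1,...,n}. Define an n×n array M by M[i,j] = A if i ∈ A and j ∈ A, M[i,j] = B if i ∈ B and j ∈ B, M[i,j] = C if i ∈ C and j ∈ C, and M[i,j] = ∅ otherwise. Then for any k ≥ 1 and any (n²,k)-array N, there exist indices i, j such that M[i,j] ∩ N[i,j] ≠ ∅. -/
/-- An (n²,k)-array: an n×n array of k-subsets of {1,…,n} (modelled as `Fin n`),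
such that every symbol occurs exactly k times among the entries in each row and
each column. -/
def IsArray2 (n k : ℕ) (A : Fin n → Fin n → Finset (Fin n)) : Prop :=
  (∀ i j, (A i j).card = k) ∧
  (∀ (i : Fin n) (s : Fin n), (Finset.univ.filter fun j => s ∈ A i j).card = k) ∧
  (∀ (j : Fin n) (s : Fin n), (Finset.univ.filter fun i => s ∈ A i j).card = k)
/-- The block A = {1,…,a} of symbols (0-indexed as values < a in `Fin n`). -/
def blkA (n a : ℕ) : Finset (Fin n) := Finset.univ.filter fun s => (s : ℕ) < a

/-- The block B = {a+1,…,a+b}. -/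
def blkB (n a b : ℕ) : Finset (Fin n) :=
  Finset.univ.filter fun s => a ≤ (s : ℕ) ∧ (s : ℕ) < a + b

/-- The block C = {a+b+1,…,n}. -/
def blkC (n a b : ℕ) : Finset (Fin n) := Finset.univ.filter fun s => a + b ≤ (s : ℕ)

/-- The block-diagonal (m,m,m)-array M: M[i,j] = A on A×A, B on B×B, C on C×C,
and ∅ otherwise. -/
def blkM (n a b : ℕ) (i j : Fin n) : Finset (Fin n) :=
  if (i : ℕ) < a ∧ (j : ℕ) < a then blkA n a
  else if (a ≤ (i : ℕ) ∧ (i : ℕ) < a + b) ∧ (a ≤ (j : ℕ) ∧ (j : ℕ) < a + b) then blkB n a b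
  else if a + b ≤ (i : ℕ) ∧ a + b ≤ (j : ℕ) then blkC n a b
  else ∅

set_option maxHeartbeats 1000000 in
/-- Theorem (unavoidable block-diagonal array): with n = a+b+c, a,b,c positive and
not all equal, for every k ≥ 1 and every (n²,k)-array N there are indices i, j
with M[i,j] ∩ N[i,j] ≠ ∅. -/
theorem stmt_0 (a b c n : ℕ) (ha : 0 < a) (hb : 0 < b) (hc : 0 < c)
    (hne : ¬(a = b ∧ b = c)) (hn : n = a + b + c) (k : ℕ) (hk : 1 ≤ k)
    (N : Fin n → Fin n → Finset (Fin n)) (hN : IsArray2 n k N) :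
    ∃ i j : Fin n, (blkM n a b i j ∩ N i j).Nonempty := by

  by_contra hcon
  push_neg at hcon
  obtain ⟨hcard, hrow, hcol⟩ := hN
  -- cardinality of initial segments of Fin n
  have cardlt : ∀ m : ℕ, m ≤ n →
      (Finset.univ.filter fun i : Fin n => (i : ℕ) < m).card = m := by
    intro m hm
    rw [Finset.card_filter]
    rw [Fin.sum_univ_eq_sum_range (fun i => if i < m then 1 else 0) n]
    rw [← Finset.card_filter]
    have : (Finset.range n).filter (fun i => i < m) = Finset.range m := by
      ext x; simp only [Finset.mem_filter, Finset.mem_range]; omega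
    rw [this, Finset.card_range]
  have hA : (blkA n a).card = a := cardlt a (by omega)
  have hAB : (Finset.univ.filter fun i : Fin n => (i : ℕ) < a + b).card = a + b :=
    cardlt (a + b) (by omega)
  have huniv : (Finset.univ : Finset (Fin n)).card = n := by
    simp [Finset.card_univ]
  have hC : (blkC n a b).card = c := by
    have he : blkC n a b = Finset.univ \ (Finset.univ.filter fun i : Fin n => (i : ℕ) < a + b) := by
      rw [← Finset.filter_not]
      ext x; simp [blkC]
    rw [he, Finset.card_sdiff_of_subset (Finset.filter_subset _ _), hAB, huniv]
    omega
  have hB : (blkB n a b).card = b := by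
    have he : blkB n a b = (Finset.univ.filter fun i : Fin n => (i : ℕ) < a + b) \ (blkA n a) := by
      ext x; simp [blkB, blkA]; omega
    have hsub : blkA n a ⊆ Finset.univ.filter fun i : Fin n => (i : ℕ) < a + b := by
      intro x hx; simp [blkA] at hx; simp; omega
    rw [he, Finset.card_sdiff_of_subset hsub, hAB, hA]
    omega
  have hAC : (Finset.univ.filter fun i : Fin n => (i : ℕ) < a ∨ a + b ≤ (i : ℕ)).card = a + c := by
    have he : (Finset.univ.filter fun i : Fin n => (i : ℕ) < a ∨ a + b ≤ (i : ℕ))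
        = Finset.univ \ blkB n a b := by
      ext x; simp [blkB]; omega
    rw [he, Finset.card_sdiff_of_subset (Finset.subset_univ _), hB, huniv]
    omega
  -- avoidance facts
  have avA : ∀ i j : Fin n, (i : ℕ) < a → (j : ℕ) < a → (N i j ∩ blkA n a).card = 0 := by
    intro i j hi hj
    have h := hcon i j
    rw [blkM, if_pos ⟨hi, hj⟩] at h
    rw [Finset.inter_comm, h, Finset.card_empty]
  have avB : ∀ i j : Fin n,
      a ≤ (i : ℕ) → (i : ℕ) < a + b → a ≤ (j : ℕ) → (j : ℕ) < a + b →
      (N i j ∩ blkB n a b).card = 0 := by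
    intro i j hi1 hi2 hj1 hj2
    have h := hcon i j
    rw [blkM, if_neg (by omega), if_pos ⟨⟨hi1, hi2⟩, hj1, hj2⟩] at h
    rw [Finset.inter_comm, h, Finset.card_empty]
  have avC : ∀ i j : Fin n, a + b ≤ (i : ℕ) → a + b ≤ (j : ℕ) →
      (N i j ∩ blkC n a b).card = 0 := by
    intro i j hi hj
    have h := hcon i j
    rw [blkM, if_neg (by omega), if_neg (by omega), if_pos ⟨hi, hj⟩] at h
    rw [Finset.inter_comm, h, Finset.card_empty]
  -- each cell is partitioned among the three symbol classes
  have hk3 : ∀ i j : Fin n,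
      (N i j ∩ blkA n a).card + (N i j ∩ blkB n a b).card + (N i j ∩ blkC n a b).card = k := by
    intro i j
    have dAB : Disjoint (N i j ∩ blkA n a) (N i j ∩ blkB n a b) := by
      rw [Finset.disjoint_left]
      intro x hx hx'
      simp [blkA, blkB, Finset.mem_inter] at hx hx'
      omega
    have dABC : Disjoint ((N i j ∩ blkA n a) ∪ (N i j ∩ blkB n a b)) (N i j ∩ blkC n a b) := by
      rw [Finset.disjoint_left]
      intro x hx hx'
      simp [blkA, blkB, blkC, Finset.mem_inter, Finset.mem_union] at hx hx'
      omega
    have hu : (N i j ∩ blkA n a) ∪ (N i j ∩ blkB n a b) ∪ (N i j ∩ blkC n a b) = N i j := by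
      ext x
      simp [blkA, blkB, blkC, Finset.mem_inter, Finset.mem_union]
      constructor
      · rintro (⟨h, _⟩ | ⟨h, _⟩ | ⟨h, _⟩) <;> exact h
      · intro h
        rcases lt_or_ge (x : ℕ) a with h1 | h1
        · exact Or.inl ⟨h, h1⟩
        · rcases lt_or_ge (x : ℕ) (a + b) with h2 | h2
          · exact Or.inr (Or.inl ⟨h, h1, h2⟩)
          · exact Or.inr (Or.inr ⟨h, h2⟩)
    have := hcard i j
    rw [← hu, Finset.card_union_of_disjoint dABC, Finset.card_union_of_disjoint dAB] at this
    omega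
  -- row and column sums
  have rowS : ∀ (i : Fin n) (S : Finset (Fin n)),
      ∑ j : Fin n, (N i j ∩ S).card = S.card * k := by
    intro i S
    have h1 : ∀ j : Fin n, (N i j ∩ S).card = ∑ s ∈ S, if s ∈ N i j then 1 else 0 := by
      intro j
      rw [Finset.inter_comm, ← Finset.filter_mem_eq_inter, Finset.card_filter]
    simp_rw [h1]
    rw [Finset.sum_comm]
    have h2 : ∀ s ∈ S, (∑ j : Fin n, if s ∈ N i j then 1 else 0) = k := by
      intro s _
      rw [← Finset.card_filter]
      exact hrow i s
    rw [Finset.sum_congr rfl h2, Finset.sum_const, smul_eq_mul]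
  have colS : ∀ (j : Fin n) (S : Finset (Fin n)),
      ∑ i : Fin n, (N i j ∩ S).card = S.card * k := by
    intro j S
    have h1 : ∀ i : Fin n, (N i j ∩ S).card = ∑ s ∈ S, if s ∈ N i j then 1 else 0 := by
      intro i
      rw [Finset.inter_comm, ← Finset.filter_mem_eq_inter, Finset.card_filter]
    simp_rw [h1]
    rw [Finset.sum_comm]
    have h2 : ∀ s ∈ S, (∑ i : Fin n, if s ∈ N i j then 1 else 0) = k := by
      intro s _
      rw [← Finset.card_filter]
      exact hcol j s
    rw [Finset.sum_congr rfl h2, Finset.sum_const, smul_eq_mul]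
  -- the per-cell key inequality
  have key : ∀ i j : Fin n,
      (if (j : ℕ) < a then (if (i : ℕ) < a then k else 0) else 0)
      + (if a + b ≤ (j : ℕ) then
          (if (i : ℕ) < a then k else 0) + (if a + b ≤ (i : ℕ) then k else 0) else 0)
      + (if (j : ℕ) < a + b then (N i j ∩ blkA n a).card else 0)
      + (if a ≤ (j : ℕ) ∧ (j : ℕ) < a + b then (N i j ∩ blkB n a b).card else 0)
      ≤ (N i j ∩ blkA n a).card
        + (if (i : ℕ) < a ∨ a + b ≤ (i : ℕ) then (N i j ∩ blkB n a b).card else 0)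
        + (if (i : ℕ) < a then (N i j ∩ blkC n a b).card else 0) := by
    intro i j
    have e0 := hk3 i j
    have e1 : (i : ℕ) < a → (j : ℕ) < a → (N i j ∩ blkA n a).card = 0 := avA i j
    have e2 : a ≤ (i : ℕ) → (i : ℕ) < a + b → a ≤ (j : ℕ) → (j : ℕ) < a + b →
        (N i j ∩ blkB n a b).card = 0 := avB i j
    have e3 : a + b ≤ (i : ℕ) → a + b ≤ (j : ℕ) → (N i j ∩ blkC n a b).card = 0 := avC i j
    split_ifs <;> omega
  -- sum both sides
  have main : ∑ i : Fin n, ∑ j : Fin n,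
      ((if (j : ℕ) < a then (if (i : ℕ) < a then k else 0) else 0)
      + (if a + b ≤ (j : ℕ) then
          (if (i : ℕ) < a then k else 0) + (if a + b ≤ (i : ℕ) then k else 0) else 0)
      + (if (j : ℕ) < a + b then (N i j ∩ blkA n a).card else 0)
      + (if a ≤ (j : ℕ) ∧ (j : ℕ) < a + b then (N i j ∩ blkB n a b).card else 0))
      ≤ ∑ i : Fin n, ∑ j : Fin n,
      ((N i j ∩ blkA n a).card
        + (if (i : ℕ) < a ∨ a + b ≤ (i : ℕ) then (N i j ∩ blkB n a b).card else 0)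
        + (if (i : ℕ) < a then (N i j ∩ blkC n a b).card else 0)) :=
    Finset.sum_le_sum fun i _ => Finset.sum_le_sum fun j _ => key i j
  -- evaluate the right-hand side
  have sum_ite_const : ∀ (P : Fin n → Prop) [DecidablePred P] (t : ℕ),
      (∑ i : Fin n, if P i then t else 0) = (Finset.univ.filter P).card * t := by
    intro P _ t
    rw [← Finset.sum_filter, Finset.sum_const, smul_eq_mul]
  have hR : ∑ i : Fin n, ∑ j : Fin n,
      ((N i j ∩ blkA n a).card
        + (if (i : ℕ) < a ∨ a + b ≤ (i : ℕ) then (N i j ∩ blkB n a b).card else 0)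
        + (if (i : ℕ) < a then (N i j ∩ blkC n a b).card else 0))
      = n * (a * k) + (a + c) * (b * k) + a * (c * k) := by
    have hrow' : ∀ i : Fin n, ∑ j : Fin n,
        ((N i j ∩ blkA n a).card
        + (if (i : ℕ) < a ∨ a + b ≤ (i : ℕ) then (N i j ∩ blkB n a b).card else 0)
        + (if (i : ℕ) < a then (N i j ∩ blkC n a b).card else 0))
        = a * k + (if (i : ℕ) < a ∨ a + b ≤ (i : ℕ) then b * k else 0)
          + (if (i : ℕ) < a then c * k else 0) := by
      intro i
      rw [Finset.sum_add_distrib, Finset.sum_add_distrib]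
      congr 1
      · congr 1
        · rw [rowS i (blkA n a), hA]
        · split_ifs with h
          · rw [rowS i (blkB n a b), hB]
          · exact Finset.sum_const_zero
      · split_ifs with h
        · rw [rowS i (blkC n a b), hC]
        · exact Finset.sum_const_zero
    rw [Finset.sum_congr rfl fun i _ => hrow' i]
    rw [Finset.sum_add_distrib, Finset.sum_add_distrib]
    rw [Finset.sum_const, smul_eq_mul, huniv]
    rw [sum_ite_const _ (b * k), hAC, sum_ite_const _ (c * k)]
    have h1 : (Finset.univ.filter fun i : Fin n => (i : ℕ) < a) = blkA n a := rfl
    rw [h1, hA]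
  -- evaluate the left-hand side
  have hL : ∑ i : Fin n, ∑ j : Fin n,
      ((if (j : ℕ) < a then (if (i : ℕ) < a then k else 0) else 0)
      + (if a + b ≤ (j : ℕ) then
          (if (i : ℕ) < a then k else 0) + (if a + b ≤ (i : ℕ) then k else 0) else 0)
      + (if (j : ℕ) < a + b then (N i j ∩ blkA n a).card else 0)
      + (if a ≤ (j : ℕ) ∧ (j : ℕ) < a + b then (N i j ∩ blkB n a b).card else 0))
      = a * (a * k) + c * (a * k + c * k) + (a + b) * (a * k) + b * (b * k) := by
    rw [Finset.sum_comm]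
    have hcol' : ∀ j : Fin n, ∑ i : Fin n,
        ((if (j : ℕ) < a then (if (i : ℕ) < a then k else 0) else 0)
        + (if a + b ≤ (j : ℕ) then
            (if (i : ℕ) < a then k else 0) + (if a + b ≤ (i : ℕ) then k else 0) else 0)
        + (if (j : ℕ) < a + b then (N i j ∩ blkA n a).card else 0)
        + (if a ≤ (j : ℕ) ∧ (j : ℕ) < a + b then (N i j ∩ blkB n a b).card else 0))
        = (if (j : ℕ) < a then a * k else 0)
          + (if a + b ≤ (j : ℕ) then a * k + c * k else 0)
          + (if (j : ℕ) < a + b then a * k else 0)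
          + (if a ≤ (j : ℕ) ∧ (j : ℕ) < a + b then b * k else 0) := by
      intro j
      rw [Finset.sum_add_distrib, Finset.sum_add_distrib, Finset.sum_add_distrib]
      congr 1
      · congr 1
        · congr 1
          · split_ifs with h
            · rw [sum_ite_const _ k]
              have : (Finset.univ.filter fun i : Fin n => (i : ℕ) < a) = blkA n a := rfl
              rw [this, hA]
            · exact Finset.sum_const_zero
          · split_ifs with h
            · rw [Finset.sum_add_distrib, sum_ite_const _ k, sum_ite_const _ k]
              have h1 : (Finset.univ.filter fun i : Fin n => (i : ℕ) < a) = blkA n a := rfl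
              have h2 : (Finset.univ.filter fun i : Fin n => a + b ≤ (i : ℕ)) = blkC n a b := rfl
              rw [h1, h2, hA, hC]
            · exact Finset.sum_const_zero
        · split_ifs with h
          · rw [colS j (blkA n a), hA]
          · exact Finset.sum_const_zero
      · split_ifs with h
        · rw [colS j (blkB n a b), hB]
        · exact Finset.sum_const_zero
    rw [Finset.sum_congr rfl fun j _ => hcol' j]
    rw [Finset.sum_add_distrib, Finset.sum_add_distrib, Finset.sum_add_distrib]
    rw [sum_ite_const _ (a * k), sum_ite_const _ (a * k + c * k),
        sum_ite_const _ (a * k), sum_ite_const _ (b * k)]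
    have h1 : (Finset.univ.filter fun j : Fin n => (j : ℕ) < a) = blkA n a := rfl
    have h2 : (Finset.univ.filter fun j : Fin n => a + b ≤ (j : ℕ)) = blkC n a b := rfl
    have h3 : (Finset.univ.filter fun j : Fin n => a ≤ (j : ℕ) ∧ (j : ℕ) < a + b) = blkB n a b := rfl
    rw [h1, h2, h3, hA, hB, hC, hAB]
  rw [hL, hR] at main
  -- conclude the arithmetic contradiction
  subst hn
  have hkey : (2 * (a * a) + a * c + c * c + a * b + b * b) * k
      ≤ (a * a + 2 * (a * b) + 2 * (a * c) + b * c) * k := by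
    calc (2 * (a * a) + a * c + c * c + a * b + b * b) * k
        = a * (a * k) + c * (a * k + c * k) + (a + b) * (a * k) + b * (b * k) := by ring
      _ ≤ (a + b + c) * (a * k) + (a + c) * (b * k) + a * (c * k) := main
      _ = (a * a + 2 * (a * b) + 2 * (a * c) + b * c) * k := by ring
  have hk0 : 0 < k := hk
  have hq : 2 * (a * a) + a * c + c * c + a * b + b * b
      ≤ a * a + 2 * (a * b) + 2 * (a * c) + b * c :=
    Nat.le_of_mul_le_mul_right hkey hk0
  have hq' : a * a + b * b + c * c ≤ a * b + b * c + a * c := by omega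
  apply hne
  have hz : ((a : ℤ) - b) ^ 2 + ((b : ℤ) - c) ^ 2 + ((a : ℤ) - c) ^ 2 ≤ 0 := by
    have : (a * a + b * b + c * c : ℤ) ≤ a * b + b * c + a * c := by exact_mod_cast hq'
    nlinarith
  have hab : (a : ℤ) = b := by nlinarith [sq_nonneg ((a : ℤ) - b), sq_nonneg ((b : ℤ) - c), sq_nonneg ((a : ℤ) - c)]
  have hbc : (b : ℤ) = c := by nlinarith [sq_nonneg ((a : ℤ) - b), sq_nonneg ((b : ℤ) - c), sq_nonneg ((a : ℤ) - c)]
  exact ⟨by exact_mod_cast hab, by exact_mod_cast hbc⟩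
end

section
/- Let n = a + b + c with a, b, c positive integers, and let N be an (n²,k)-array (k ≥ 1) whose entries are disjoint from the block-diagonal array M defined by M[i,j] = A for (i,j) ∈ A×A, M[i,j] = B for (i,j) ∈ B×B, M[i,j] = C for (i,j) ∈ C×C, and ∅ otherwise, where A = {1,...,a}, B = {a+1,...,a+b}, C = {a+b+1,...,n}. Then the total contribution to the sum Σ|N[i,j]| over (i,j) ∈ (A×A) ∪ (B×B) ∪ (C×C) from symbols in A is at most a(nk − 2ak). -/
/-- The diagonal region (A×A) ∪ (B×B) ∪ (C×C). -/
def onDiag (a b : ℕ) {n : ℕ} (i j : Fin n) : Prop :=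
  ((i : ℕ) < a ∧ (j : ℕ) < a) ∨
  ((a ≤ (i : ℕ) ∧ (i : ℕ) < a + b) ∧ (a ≤ (j : ℕ) ∧ (j : ℕ) < a + b)) ∨
  (a + b ≤ (i : ℕ) ∧ a + b ≤ (j : ℕ))

instance (a b : ℕ) {n : ℕ} (i j : Fin n) : Decidable (onDiag a b i j) := by
  unfold onDiag; infer_instance

/-- If the (n²,k)-array N is disjoint from the block-diagonal array M, then the
contribution from symbols in A to Σ |N[i,j]| over the diagonal blocks is at most
a(nk − 2ak). -/
theorem stmt_2 (a b c n : ℕ) (ha : 0 < a) (hb : 0 < b) (hc : 0 < c)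
    (hn : n = a + b + c) (k : ℕ) (hk : 1 ≤ k)
    (N : Fin n → Fin n → Finset (Fin n)) (hN : IsArray2 n k N)
    (hdisj : ∀ i j : Fin n, blkM n a b i j ∩ N i j = ∅) :
    (∑ i : Fin n, ∑ j : Fin n,
        if onDiag a b i j then ((N i j ∩ blkA n a).card : ℤ) else 0) ≤
      (a : ℤ) * ((n : ℤ) * (k : ℤ) - 2 * (a : ℤ) * (k : ℤ)) := by
  obtain ⟨hcardN, hrow, hcol⟩ := hN
  have han : a < n := by omega
  -- symbols with value < a cannot appear on A×A cells
  have hforb : ∀ i j s : Fin n, (i:ℕ) < a → (j:ℕ) < a → (s:ℕ) < a → s ∉ N i j := by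
    intro i j s hi hj hs hmem
    have h1 : s ∈ blkM n a b i j ∩ N i j := by
      rw [Finset.mem_inter]
      refine ⟨?_, hmem⟩
      unfold blkM
      rw [if_pos ⟨hi, hj⟩]
      simp [blkA, hs]
    rw [hdisj i j] at h1
    exact absurd h1 (Finset.notMem_empty s)
  have hcardlt : (Finset.univ.filter fun i : Fin n => (i:ℕ) < a).card = a := by
    have h : (Finset.univ.filter fun i : Fin n => (i:ℕ) < a)
        = Finset.Iio (⟨a, han⟩ : Fin n) := by
      ext i; simp [Fin.lt_def]
    rw [h, Fin.card_Iio]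
  have hrowZ : ∀ (i s : Fin n), (∑ j : Fin n, if s ∈ N i j then (1:ℤ) else 0) = k := by
    intro i s
    rw [Finset.sum_boole, hrow i s]
  have hcolZ : ∀ (j s : Fin n), (∑ i : Fin n, if s ∈ N i j then (1:ℤ) else 0) = k := by
    intro j s
    rw [Finset.sum_boole, hcol j s]
  -- key per-symbol count on the lower-right quadrant
  have key : ∀ s : Fin n, (s:ℕ) < a →
      (∑ i : Fin n, ∑ j : Fin n,
        if (¬ (i:ℕ) < a) ∧ (¬ (j:ℕ) < a) ∧ s ∈ N i j then (1:ℤ) else 0)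
      = (n:ℤ)*k - 2*(a:ℤ)*k := by
    intro s hs
    have htot : (∑ i : Fin n, ∑ j : Fin n, if s ∈ N i j then (1:ℤ) else 0)
        = (n:ℤ)*k := by
      rw [Finset.sum_congr rfl fun i _ => hrowZ i s]
      simp [Finset.card_univ, mul_comm]
    have h1 : (∑ i : Fin n, ∑ j : Fin n,
        if (i:ℕ) < a ∧ s ∈ N i j then (1:ℤ) else 0) = (a:ℤ)*k := by
      have e : ∀ i : Fin n, (∑ j : Fin n, if (i:ℕ) < a ∧ s ∈ N i j then (1:ℤ) else 0)
          = if (i:ℕ) < a then (k:ℤ) else 0 := by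
        intro i
        by_cases h : (i:ℕ) < a
        · simp only [h, true_and, if_true]; exact hrowZ i s
        · simp [h]
      rw [Finset.sum_congr rfl fun i _ => e i, Finset.sum_ite, Finset.sum_const,
        Finset.sum_const_zero, add_zero, hcardlt, nsmul_eq_mul]
    have h2 : (∑ i : Fin n, ∑ j : Fin n,
        if (¬ (i:ℕ) < a) ∧ (j:ℕ) < a ∧ s ∈ N i j then (1:ℤ) else 0) = (a:ℤ)*k := by
      rw [Finset.sum_comm]
      have e : ∀ j : Fin n, (∑ i : Fin n,
          if (¬ (i:ℕ) < a) ∧ (j:ℕ) < a ∧ s ∈ N i j then (1:ℤ) else 0)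
          = if (j:ℕ) < a then (k:ℤ) else 0 := by
        intro j
        by_cases hj : (j:ℕ) < a
        · simp only [hj, true_and, if_true]
          have e2 : ∀ i : Fin n, (if (¬ (i:ℕ) < a) ∧ s ∈ N i j then (1:ℤ) else 0)
              = if s ∈ N i j then (1:ℤ) else 0 := by
            intro i
            by_cases hi : (i:ℕ) < a
            · simp [hi, hforb i j s hi hj hs]
            · simp [hi]
          rw [Finset.sum_congr rfl fun i _ => e2 i]
          exact hcolZ j s
        · simp [hj]
      rw [Finset.sum_congr rfl fun j _ => e j, Finset.sum_ite, Finset.sum_const,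
        Finset.sum_const_zero, add_zero, hcardlt, nsmul_eq_mul]
    have hsplit : (∑ i : Fin n, ∑ j : Fin n, if s ∈ N i j then (1:ℤ) else 0)
        = (∑ i : Fin n, ∑ j : Fin n, if (i:ℕ) < a ∧ s ∈ N i j then (1:ℤ) else 0)
          + (∑ i : Fin n, ∑ j : Fin n,
              if (¬ (i:ℕ) < a) ∧ (j:ℕ) < a ∧ s ∈ N i j then (1:ℤ) else 0)
          + (∑ i : Fin n, ∑ j : Fin n,
              if (¬ (i:ℕ) < a) ∧ (¬ (j:ℕ) < a) ∧ s ∈ N i j then (1:ℤ) else 0) := by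
      rw [← Finset.sum_add_distrib, ← Finset.sum_add_distrib]
      refine Finset.sum_congr rfl fun i _ => ?_
      rw [← Finset.sum_add_distrib, ← Finset.sum_add_distrib]
      refine Finset.sum_congr rfl fun j _ => ?_
      by_cases h1' : (i:ℕ) < a <;> by_cases h2' : (j:ℕ) < a <;>
        by_cases h3' : s ∈ N i j <;> simp [h1', h2', h3']
    rw [htot, h1, h2] at hsplit
    linarith
  -- rewrite LHS as a sum over symbols
  have hcardA : (blkA n a).card = a := hcardlt
  have inner : ∀ i j : Fin n,
      (if onDiag a b i j then ((N i j ∩ blkA n a).card : ℤ) else 0)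
      = ∑ s ∈ blkA n a, if onDiag a b i j ∧ s ∈ N i j then (1:ℤ) else 0 := by
    intro i j
    by_cases h : onDiag a b i j
    · simp only [h, true_and, if_true]
      rw [Finset.sum_boole]
      have hset : (blkA n a).filter (fun s => s ∈ N i j) = N i j ∩ blkA n a := by
        ext s; simp [Finset.mem_inter, Finset.mem_filter, and_comm]
      rw [hset]
    · simp [h]
  have hLHS : (∑ i : Fin n, ∑ j : Fin n,
        if onDiag a b i j then ((N i j ∩ blkA n a).card : ℤ) else 0)
      = ∑ s ∈ blkA n a, ∑ i : Fin n, ∑ j : Fin n,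
          if onDiag a b i j ∧ s ∈ N i j then (1:ℤ) else 0 := by
    rw [Finset.sum_congr rfl fun i _ => Finset.sum_congr rfl fun j _ => inner i j]
    rw [Finset.sum_congr rfl fun i (_ : i ∈ Finset.univ) => Finset.sum_comm]
    exact Finset.sum_comm
  rw [hLHS]
  have hbound : ∀ s ∈ blkA n a,
      (∑ i : Fin n, ∑ j : Fin n,
        if onDiag a b i j ∧ s ∈ N i j then (1:ℤ) else 0)
      ≤ (n:ℤ)*k - 2*(a:ℤ)*k := by
    intro s hsmem
    have hs : (s:ℕ) < a := by
      simpa [blkA] using hsmem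
    rw [← key s hs]
    refine Finset.sum_le_sum fun i _ => Finset.sum_le_sum fun j _ => ?_
    split_ifs with hc1 hc2
    · rfl
    · exfalso
      obtain ⟨hd, hmem⟩ := hc1
      rcases hd with ⟨hi, hj⟩ | ⟨⟨hi, _⟩, ⟨hj, _⟩⟩ | ⟨hi, hj⟩
      · exact hforb i j s hi hj hs hmem
      · exact hc2 ⟨by omega, by omega, hmem⟩
      · exact hc2 ⟨by omega, by omega, hmem⟩
    · norm_num
    · rfl
  calc (∑ s ∈ blkA n a, ∑ i : Fin n, ∑ j : Fin n,
          if onDiag a b i j ∧ s ∈ N i j then (1:ℤ) else 0)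
      ≤ ∑ _s ∈ blkA n a, ((n:ℤ)*k - 2*(a:ℤ)*k) := Finset.sum_le_sum hbound
    _ = (a:ℤ) * ((n:ℤ)*k - 2*(a:ℤ)*k) := by
        rw [Finset.sum_const, hcardA, nsmul_eq_mul]
end

section
/- If d' > d ≥ 3 and there exists a nonextendible Latin hypercuboid in LHC(d,n,k), then there exists a nonextendible Latin hypercuboid in LHC(d',n,k). Consequently NE(d',n) ≤ NE(d,n). -/
/-- A Latin hypercuboid in LHC(D+1, n, k): a D-dimensional n×⋯×n array of
columns of length k (so a (D+1)-dimensional n×⋯×n×k array), with entries in a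
symbol set `α` (normally `Fin n`), such that each symbol occurs at most once in
each axis-parallel line: the entries along each column (last axis) are distinct,
and for each fixed layer ℓ and each axis t, the entries along any line in
direction t are distinct. -/
def IsLHC (D n k : ℕ) {α : Type} (H : (Fin D → Fin n) → Fin k → α) : Prop :=
  (∀ x, Function.Injective (H x)) ∧
  ∀ (t : Fin D) (x : Fin D → Fin n) (ℓ : Fin k) (v w : Fin n),
    H (Function.update x t v) ℓ = H (Function.update x t w) ℓ → v = w

/-- H ∈ LHC(D+1,n,k) is extendible if it is contained in a member of
LHC(D+1,n,k+1). -/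
def Extendible (D n k : ℕ) (H : (Fin D → Fin n) → Fin k → Fin n) : Prop :=
  ∃ H' : (Fin D → Fin n) → Fin (k + 1) → Fin n,
    IsLHC D n (k + 1) H' ∧ ∀ (x : Fin D → Fin n) (ℓ : Fin k), H' x ℓ.castSucc = H x ℓ

/-- H ∈ LHC(D+1,n,k) is completable if it is contained in a Latin hypercube,
i.e. a member of LHC(D+1,n,n). -/
def Completable (D n k : ℕ) (H : (Fin D → Fin n) → Fin k → Fin n) : Prop :=
  ∃ L : (Fin D → Fin n) → Fin n → Fin n,
    IsLHC D n n L ∧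
      ∀ (x : Fin D → Fin n) (ℓ : Fin k) (hℓ : (ℓ : ℕ) < n), L x ⟨ℓ, hℓ⟩ = H x ℓ

/-- The array of unused symbols of each line of H along the last axis. -/
def UH (D n k : ℕ) (H : (Fin D → Fin n) → Fin k → Fin n) :
    (Fin D → Fin n) → Finset (Fin n) :=
  fun x => Finset.univ \ Finset.image (H x) Finset.univ
/-- NE(d,n): the smallest k for which a nonextendible member of LHC(d,n,k)
exists (⊤ if there is none). -/
noncomputable def NE (d n : ℕ) : ℕ∞ :=
  sInf ((fun k : ℕ => (k : ℕ∞)) ''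
    {k : ℕ | ∃ H : (Fin (d - 1) → Fin n) → Fin k → Fin n,
      IsLHC (d - 1) n k H ∧ ¬ Extendible (d - 1) n k H})

lemma ext_of_zero (D k : ℕ) (hD : 0 < D) (H : (Fin D → Fin 0) → Fin k → Fin 0) :
    Extendible D 0 k H := by
  haveI : IsEmpty (Fin D → Fin 0) := ⟨fun x => Fin.elim0 (x ⟨0, hD⟩)⟩
  exact ⟨fun x => isEmptyElim x, ⟨fun x => isEmptyElim x, fun t x => isEmptyElim x⟩,
    fun x => isEmptyElim x⟩

lemma main_lift (D D' N k : ℕ) (hDD : D ≤ D')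
    (H : (Fin D → Fin (N+1)) → Fin k → Fin (N+1))
    (hH : IsLHC D (N+1) k H) (hne : ¬ Extendible D (N+1) k H) :
    ∃ I : (Fin D' → Fin (N+1)) → Fin k → Fin (N+1),
      IsLHC D' (N+1) k I ∧ ¬ Extendible D' (N+1) k I := by
  set m := D' - D with hm
  have hsplit : D' = m + D := by omega
  let embL : Fin m → Fin D' := fun i => ⟨i.val, by omega⟩
  let embR : Fin D → Fin D' := fun j => ⟨m + j.val, by omega⟩
  have hembL : Function.Injective embL := fun a b h => by
    simpa [embL, Fin.ext_iff] using h
  have hembR : Function.Injective embR := fun a b h => by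
    simpa [embR, Fin.ext_iff] using h
  have hLR : ∀ i j, embL i ≠ embR j := fun i j h => by
    have := congrArg Fin.val h
    simp only [embL, embR] at this
    omega
  let rest : (Fin D' → Fin (N+1)) → (Fin D → Fin (N+1)) := fun x j => x (embR j)
  let S : (Fin D' → Fin (N+1)) → Fin (N+1) := fun x => ∑ i : Fin m, x (embL i)
  let I : (Fin D' → Fin (N+1)) → Fin k → Fin (N+1) := fun x ℓ => S x + H (rest x) ℓ
  -- update lemmas
  have restL : ∀ x i v, rest (Function.update x (embL i) v) = rest x := by
    intro x i v; funext j
    simp only [rest, Function.update_apply]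
    rw [if_neg (fun h => hLR i j h.symm)]
  have restR : ∀ x j v, rest (Function.update x (embR j) v)
      = Function.update (rest x) j v := by
    intro x j v; funext j'
    simp only [rest, Function.update_apply]
    by_cases h : j' = j
    · subst h; simp
    · rw [if_neg (fun hh => h (hembR hh)), if_neg h]
  have SR : ∀ x j v, S (Function.update x (embR j) v) = S x := by
    intro x j v
    refine Finset.sum_congr rfl fun i _ => ?_
    simp only [Function.update_apply]
    rw [if_neg (hLR i j)]
  have SL : ∀ x i v, S (Function.update x (embL i) v)
      = Function.update (fun i' => x (embL i')) i v i
        + ∑ i' ∈ Finset.univ.erase i, x (embL i') := by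
    intro x i v
    have : (fun i' => Function.update x (embL i) v (embL i'))
        = Function.update (fun i' => x (embL i')) i v := by
      funext i'
      simp only [Function.update_apply]
      by_cases h : i' = i
      · subst h; simp
      · rw [if_neg (fun hh => h (hembL hh)), if_neg h]
    calc S (Function.update x (embL i) v)
        = ∑ i', Function.update (fun i' => x (embL i')) i v i' := by
          simp only [S]; rw [this]
      _ = _ := by
          rw [← Finset.add_sum_erase _ _ (Finset.mem_univ i)]
          congr 1
          exact Finset.sum_congr rfl fun i' hi' =>
            Function.update_of_ne (Finset.ne_of_mem_erase hi') _ _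
  have hI : IsLHC D' (N+1) k I := by
    constructor
    · intro x a b h
      exact hH.1 (rest x) (add_left_cancel h)
    · intro t x ℓ v w h
      by_cases ht : t.val < m
      · have htL : t = embL ⟨t.val, ht⟩ := rfl
        rw [htL] at h
        simp only [I, restL] at h
        have h2 := add_right_cancel h
        rw [SL, SL] at h2
        have h3 := add_right_cancel h2
        simpa using h3
      · have htR : t = embR ⟨t.val - m, by omega⟩ := by
          simp only [embR, Fin.ext_iff]; omega
        rw [htR] at h
        simp only [I, SR, restR] at h
        exact hH.2 _ (rest x) ℓ v w (add_left_cancel h)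
  refine ⟨I, hI, fun hext => hne ?_⟩
  obtain ⟨I', hI', hres⟩ := hext
  let glue : (Fin D → Fin (N+1)) → (Fin D' → Fin (N+1)) := fun y t =>
    if h : t.val < m then 0 else y ⟨t.val - m, by omega⟩
  have rest_glue : ∀ y, rest (glue y) = y := by
    intro y; funext j
    simp only [rest, glue, embR]
    rw [dif_neg (by omega)]
    congr 1
    simp only [Fin.ext_iff]; omega
  have S_glue : ∀ y, S (glue y) = 0 := by
    intro y
    refine Finset.sum_eq_zero fun i _ => ?_
    simp only [glue, embL]
    rw [dif_pos i.isLt]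
  have glue_update : ∀ y j v, glue (Function.update y j v)
      = Function.update (glue y) (embR j) v := by
    intro y j v; funext t
    simp only [glue, Function.update_apply]
    by_cases h : t.val < m
    · rw [dif_pos h, if_neg (fun hh => by
        have := congrArg Fin.val hh
        simp only [embR] at this; omega), dif_pos h]
    · rw [dif_neg h]
      by_cases h2 : t = embR j
      · rw [if_pos h2, if_pos]
        have := congrArg Fin.val h2
        simp only [embR] at this
        simp only [Fin.ext_iff]; omega
      · rw [if_neg h2, if_neg (fun hh => h2 (by
          simp only [embR, Fin.ext_iff]
          have : (⟨t.val - m, by omega⟩ : Fin D) = j := hh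
          have := congrArg Fin.val this
          simp at this
          omega)), dif_neg h]
  refine ⟨fun y ℓ => I' (glue y) ℓ, ⟨fun y => hI'.1 (glue y), ?_⟩, fun y ℓ => ?_⟩
  · intro t y ℓ v w h
    simp only at h
    rw [glue_update, glue_update] at h
    exact hI'.2 (embR t) (glue y) ℓ v w h
  · show I' (glue y) ℓ.castSucc = H y ℓ
    rw [hres (glue y) ℓ]
    simp only [I, S_glue, rest_glue, zero_add]


/-- If d' > d ≥ 3 and a nonextendible Latin hypercuboid exists in LHC(d,n,k),
then one exists in LHC(d',n,k); consequently NE(d',n) ≤ NE(d,n). -/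
theorem stmt_4 (d d' n : ℕ) (hd : 3 ≤ d) (hdd : d < d') :
    (∀ k : ℕ,
      (∃ H : (Fin (d - 1) → Fin n) → Fin k → Fin n,
          IsLHC (d - 1) n k H ∧ ¬ Extendible (d - 1) n k H) →
      ∃ H' : (Fin (d' - 1) → Fin n) → Fin k → Fin n,
          IsLHC (d' - 1) n k H' ∧ ¬ Extendible (d' - 1) n k H') ∧
    NE d' n ≤ NE d n := by
  have key : ∀ k : ℕ,
      (∃ H : (Fin (d - 1) → Fin n) → Fin k → Fin n,
          IsLHC (d - 1) n k H ∧ ¬ Extendible (d - 1) n k H) →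
      ∃ H' : (Fin (d' - 1) → Fin n) → Fin k → Fin n,
          IsLHC (d' - 1) n k H' ∧ ¬ Extendible (d' - 1) n k H' := by
    intro k ⟨H, hH, hne⟩
    match n with
    | 0 => exact absurd (ext_of_zero (d - 1) k (by omega) H) hne
    | N + 1 => exact main_lift (d - 1) (d' - 1) N k (by omega) H hH hne
  refine ⟨key, sInf_le_sInf (Set.image_mono fun k hk => key k hk)⟩
end

section
/- If d' > d ≥ 3 and there exists a noncompletable Latin hypercuboid in LHC(d,n,k), then there exists a noncompletable Latin hypercuboid in LHC(d',n,k). Consequently NC(d',n) ≤ NC(d,n). -/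
/-- NC(d,n): the smallest k for which a noncompletable member of LHC(d,n,k)
exists (⊤ if there is none). -/
noncomputable def NC (d n : ℕ) : ℕ∞ :=
  sInf ((fun k : ℕ => (k : ℕ∞)) ''
    {k : ℕ | ∃ H : (Fin (d - 1) → Fin n) → Fin k → Fin n,
      IsLHC (d - 1) n k H ∧ ¬ Completable (d - 1) n k H})

theorem aux_key_stmt5 (D D' n k : ℕ) (hD : 0 < D) (hDD : D ≤ D')
    (H : (Fin D → Fin n) → Fin k → Fin n) (h1 : IsLHC D n k H)
    (h2 : ¬ Completable D n k H) :
    ∃ H' : (Fin D' → Fin n) → Fin k → Fin n, IsLHC D' n k H' ∧ ¬ Completable D' n k H' := by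
  rcases Nat.eq_zero_or_pos n with hn | hn
  · subst hn
    exfalso
    apply h2
    refine ⟨fun x _ => (x ⟨0, hD⟩).elim0, ⟨fun x => (x ⟨0, hD⟩).elim0,
      fun t x => (x ⟨0, hD⟩).elim0⟩, fun x => (x ⟨0, hD⟩).elim0⟩
  haveI : NeZero n := ⟨hn.ne'⟩
  set π : (Fin D' → Fin n) → Fin D → Fin n := fun x j => x (Fin.castLE hDD j) with hπ
  set T : Finset (Fin D') := Finset.univ.filter (fun i : Fin D' => D ≤ (i : ℕ)) with hT
  set s : (Fin D' → Fin n) → Fin n := fun x => ∑ i ∈ T, x i with hs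
  set emb : (Fin D → Fin n) → Fin D' → Fin n :=
    fun x i => if h : (i : ℕ) < D then x ⟨i, h⟩ else 0 with hemb
  -- basic lemmas
  have hπu1 : ∀ (x : Fin D' → Fin n) (t : Fin D) (v : Fin n),
      π (Function.update x (Fin.castLE hDD t) v) = Function.update (π x) t v := by
    intro x t v
    funext j
    simp only [hπ, Function.update_apply]
    by_cases h : j = t
    · simp [h]
    · rw [if_neg h, if_neg (by simpa [Fin.ext_iff] using fun hc => h (Fin.ext hc))]
  have hsu1 : ∀ (x : Fin D' → Fin n) (t : Fin D) (v : Fin n),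
      s (Function.update x (Fin.castLE hDD t) v) = s x := by
    intro x t v
    apply Finset.sum_congr rfl
    intro i hi
    rw [hT, Finset.mem_filter] at hi
    rw [Function.update_apply, if_neg]
    intro hc
    have : (i : ℕ) < D := by rw [hc]; exact t.isLt
    omega
  have hπu2 : ∀ (x : Fin D' → Fin n) (t : Fin D') (v : Fin n), D ≤ (t : ℕ) →
      π (Function.update x t v) = π x := by
    intro x t v ht
    funext j
    simp only [hπ, Function.update_apply]
    rw [if_neg]
    intro hc
    have : (j : ℕ) = (t : ℕ) := by rw [← hc]; rfl
    have := j.isLt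
    omega
  have hsu2 : ∀ (x : Fin D' → Fin n) (t : Fin D') (v : Fin n), D ≤ (t : ℕ) →
      s (Function.update x t v) = v + ∑ i ∈ T \ {t}, x i := by
    intro x t v ht
    exact Finset.sum_update_of_mem (by simp [hT, ht]) x v
  refine ⟨fun x ℓ => H (π x) ℓ + s x, ⟨?_, ?_⟩, ?_⟩
  · intro x ℓ₁ ℓ₂ h
    dsimp only at h
    exact (h1.1 (π x)) (add_right_cancel h)
  · intro t x ℓ v w h
    dsimp only at h
    by_cases ht : (t : ℕ) < D
    · have heq : t = Fin.castLE hDD ⟨(t : ℕ), ht⟩ := by ext; rfl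
      rw [heq, hπu1, hπu1, hsu1, hsu1] at h
      exact h1.2 ⟨(t : ℕ), ht⟩ (π x) ℓ v w (add_right_cancel h)
    · push_neg at ht
      rw [hπu2 x t v ht, hπu2 x t w ht, hsu2 x t v ht, hsu2 x t w ht,
        ← add_assoc, ← add_assoc] at h
      exact add_left_cancel (add_right_cancel h)
  · rintro ⟨L', hL', hcomp⟩
    apply h2
    have hπe : ∀ x : Fin D → Fin n, π (emb x) = x := by
      intro x
      funext j
      simp only [hπ, hemb]
      rw [dif_pos (show ((Fin.castLE hDD j : Fin D') : ℕ) < D from j.isLt)]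
      exact congrArg x (by ext; rfl)
    have hse : ∀ x : Fin D → Fin n, s (emb x) = 0 := by
      intro x
      apply Finset.sum_eq_zero
      intro i hi
      rw [hT, Finset.mem_filter] at hi
      simp only [hemb]
      rw [dif_neg (by omega)]
    have hembu : ∀ (x : Fin D → Fin n) (t : Fin D) (v : Fin n),
        emb (Function.update x t v) = Function.update (emb x) (Fin.castLE hDD t) v := by
      intro x t v
      funext i
      by_cases h : (i : ℕ) < D
      · have hiff : ((⟨(i : ℕ), h⟩ : Fin D) = t) ↔ (i = Fin.castLE hDD t) := by
          rw [Fin.ext_iff, Fin.ext_iff]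
          exact Iff.rfl
        simp only [hemb, Function.update_apply, dif_pos h]
        by_cases h2 : (⟨(i : ℕ), h⟩ : Fin D) = t
        · rw [if_pos h2, if_pos (hiff.mp h2)]
        · rw [if_neg h2, if_neg (fun hc => h2 (hiff.mpr hc))]
      · simp only [hemb, Function.update_apply, dif_neg h]
        rw [if_neg (fun hc => h (by rw [hc]; exact t.isLt))]
    refine ⟨fun x m => L' (emb x) m, ⟨?_, ?_⟩, ?_⟩
    · intro x
      exact hL'.1 (emb x)
    · intro t x m v w h
      dsimp only at h
      rw [hembu, hembu] at h
      exact hL'.2 (Fin.castLE hDD t) (emb x) m v w h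
    · intro x ℓ hℓ
      show L' (emb x) ⟨(ℓ : ℕ), hℓ⟩ = H x ℓ
      rw [hcomp (emb x) ℓ hℓ]
      show H (π (emb x)) ℓ + s (emb x) = H x ℓ
      rw [hπe, hse, add_zero]

/-- If d' > d ≥ 3 and a noncompletable Latin hypercuboid exists in LHC(d,n,k),
then one exists in LHC(d',n,k); consequently NC(d',n) ≤ NC(d,n). -/
theorem stmt_5 (d d' n : ℕ) (hd : 3 ≤ d) (hdd : d < d') :
    (∀ k : ℕ,
      (∃ H : (Fin (d - 1) → Fin n) → Fin k → Fin n,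
          IsLHC (d - 1) n k H ∧ ¬ Completable (d - 1) n k H) →
      ∃ H' : (Fin (d' - 1) → Fin n) → Fin k → Fin n,
          IsLHC (d' - 1) n k H' ∧ ¬ Completable (d' - 1) n k H') ∧
    NC d' n ≤ NC d n := by
  have hD : 0 < d - 1 := by omega
  have hDD : d - 1 ≤ d' - 1 := by omega
  constructor
  · rintro k ⟨H, h1, h2⟩
    exact aux_key_stmt5 (d - 1) (d' - 1) n k hD hDD H h1 h2
  · unfold NC
    apply sInf_le_sInf
    apply Set.image_mono
    rintro k ⟨H, h1, h2⟩
    exact aux_key_stmt5 (d - 1) (d' - 1) n k hD hDD H h1 h2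
end

section
/- Every Latin hypercuboid in LHC(d,n,n−1) is completable to a Latin hypercube of order n and dimension d. -/
/-- Every Latin hypercuboid in LHC(d,n,n−1) is completable to a Latin hypercube
of order n and dimension d. (Here d = D+1.) -/
theorem stmt_7 (D n : ℕ) (H : (Fin D → Fin n) → Fin (n - 1) → Fin n)
    (hH : IsLHC D n (n - 1) H) : Completable D n (n - 1) H := by
  rcases n with _ | m
  · exact ⟨fun x ℓ => ℓ, ⟨fun x a b h => h, fun t x ℓ => ℓ.elim0⟩, fun x ℓ => ℓ.elim0⟩
  -- n = m + 1, so n - 1 = m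
  have h1 : ∀ x : Fin D → Fin (m + 1),
      ∃ a, (Finset.univ \ Finset.image (H x) Finset.univ) = {a} := by
    intro x
    rw [← Finset.card_eq_one, Finset.card_sdiff_of_subset (Finset.subset_univ _),
      Finset.card_image_of_injective _ (hH.1 x)]
    simp
  choose M hM using h1
  have hMnot : ∀ x s, s ∉ Finset.image (H x) Finset.univ → s = M x := by
    intro x s hs
    have hmem : s ∈ Finset.univ \ Finset.image (H x) Finset.univ :=
      Finset.mem_sdiff.mpr ⟨Finset.mem_univ _, hs⟩
    rw [hM x] at hmem
    exact Finset.mem_singleton.mp hmem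
  have hMmem : ∀ x, M x ∉ Finset.image (H x) Finset.univ := by
    intro x
    have hmem : M x ∈ Finset.univ \ Finset.image (H x) Finset.univ := by
      rw [hM x]; exact Finset.mem_singleton_self (M x)
    exact (Finset.mem_sdiff.mp hmem).2
  have hMinj : ∀ (t : Fin D) (x : Fin D → Fin (m + 1)) (v w : Fin (m + 1)),
      M (Function.update x t v) = M (Function.update x t w) → v = w := by
    intro t x
    have hsurj : Function.Surjective (fun v => M (Function.update x t v)) := by
      intro s
      by_contra hs
      push_neg at hs
      have hex : ∀ v, ∃ ℓ, H (Function.update x t v) ℓ = s := by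
        intro v
        have hmem : s ∈ Finset.image (H (Function.update x t v)) Finset.univ := by
          by_contra h
          exact hs v (hMnot _ _ h).symm
        obtain ⟨ℓ, -, hℓ⟩ := Finset.mem_image.mp hmem
        exact ⟨ℓ, hℓ⟩
      choose f hf using hex
      obtain ⟨v, w, hvw, hfvw⟩ := Fintype.exists_ne_map_eq_of_card_lt f (by simp)
      exact hvw (hH.2 t x (f v) v w (by rw [hf v, hfvw, hf w]))
    have hinj := Finite.injective_iff_surjective.mpr hsurj
    exact fun v w h => hinj h
  refine ⟨fun x ℓ => if h : (ℓ : ℕ) < m then H x ⟨ℓ, h⟩ else M x, ⟨?_, ?_⟩, ?_⟩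
  · intro x a b hab
    dsimp only at hab
    by_cases ha : (a : ℕ) < m <;> by_cases hb : (b : ℕ) < m
    · rw [dif_pos ha, dif_pos hb] at hab
      have h2 := hH.1 x hab
      rw [Fin.mk.injEq] at h2
      exact Fin.ext h2
    · rw [dif_pos ha, dif_neg hb] at hab
      exact absurd (Finset.mem_image.mpr ⟨_, Finset.mem_univ _, hab⟩) (hMmem x)
    · rw [dif_neg ha, dif_pos hb] at hab
      exact absurd (Finset.mem_image.mpr ⟨_, Finset.mem_univ _, hab.symm⟩) (hMmem x)
    · exact Fin.ext (by have := a.isLt; have := b.isLt; omega)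
  · intro t x ℓ v w h
    dsimp only at h
    by_cases hℓ : (ℓ : ℕ) < m
    · rw [dif_pos hℓ, dif_pos hℓ] at h
      exact hH.2 t x ⟨ℓ, hℓ⟩ v w h
    · rw [dif_neg hℓ, dif_neg hℓ] at h
      exact hMinj t x v w h
  · intro x ℓ hℓ
    exact dif_pos ℓ.isLt
end

section
/- Let n = a+b+c with a,b,c positive integers not all equal, and let M be the block-diagonal array with M[i,j] = A on A×A, B on B×B, C on C×C and ∅ elsewhere (A, B, C the consecutive intervals of sizes a, b, c partitioning {1,...,n}). Then M cannot be embedded in an (n², n−k)-array for any k ≥ 1; that is, there is no (n², n−k)-array P with M[i,j] ⊆ P[i,j] for all i,j. -/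
/-- class of a symbol/row/col index: 0, 1 or 2. -/
def clw (a b x : ℕ) : ℕ := if x < a then 0 else if x < a + b then 1 else 2

/-- row weight -/
def wU (z x : ℕ) : ℤ := if x ≤ z then 1 else -2
/-- column weight -/
def wV (z y : ℕ) : ℤ := if z ≤ y then 1 else -2
/-- region weight -/
def wW (x y : ℕ) : ℤ := if y ≤ x then 1 else -2

lemma wkey (z x y : ℕ) (h : ¬(z = x ∧ x = y)) : wU z x + wV z y + wW x y ≤ 0 := by
  unfold wU wV wW; split_ifs <;> omega

lemma clsum (a b c n : ℕ) (hn : n = a + b + c) (g : ℕ → ℤ) :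
    ∑ x : Fin n, g (clw a b (x : ℕ)) = (a : ℤ) * g 0 + (b : ℤ) * g 1 + (c : ℤ) * g 2 := by
  rw [Fin.sum_univ_eq_sum_range (fun x => g (clw a b x)) n]
  subst hn
  rw [Finset.range_eq_Ico,
    ← Finset.sum_Ico_consecutive _ (Nat.zero_le a) (by omega : a ≤ a + b + c),
    ← Finset.sum_Ico_consecutive _ (by omega : a ≤ a + b) (by omega : a + b ≤ a + b + c)]
  have e1 : ∑ x ∈ Finset.Ico 0 a, g (clw a b x) = (a : ℤ) * g 0 := by
    have hc : ∀ x ∈ Finset.Ico 0 a, g (clw a b x) = g 0 := by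
      intro x hx
      have := (Finset.mem_Ico.1 hx).2
      simp [clw, this]
    rw [Finset.sum_congr rfl hc, Finset.sum_const, Nat.card_Ico, nsmul_eq_mul]
    norm_num
  have e2 : ∑ x ∈ Finset.Ico a (a + b), g (clw a b x) = (b : ℤ) * g 1 := by
    have hc : ∀ x ∈ Finset.Ico a (a + b), g (clw a b x) = g 1 := by
      intro x hx
      have h := Finset.mem_Ico.1 hx
      have h1 : ¬ x < a := by omega
      have h2 : x < a + b := h.2
      simp [clw, h1, h2]
    rw [Finset.sum_congr rfl hc, Finset.sum_const, Nat.card_Ico, nsmul_eq_mul]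
    norm_num
  have e3 : ∑ x ∈ Finset.Ico (a + b) (a + b + c), g (clw a b x) = (c : ℤ) * g 2 := by
    have hc : ∀ x ∈ Finset.Ico (a + b) (a + b + c), g (clw a b x) = g 2 := by
      intro x hx
      have h := Finset.mem_Ico.1 hx
      have h1 : ¬ x < a := by omega
      have h2 : ¬ x < a + b := by omega
      simp [clw, h1, h2]
    rw [Finset.sum_congr rfl hc, Finset.sum_const, Nat.card_Ico, nsmul_eq_mul]
    have hcc : a + b + c - (a + b) = c := by omega
    rw [hcc]
  rw [e1, e2, e3]
  ring

lemma blk_sub (n a b : ℕ) (i j s : Fin n)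
    (h1 : clw a b (s : ℕ) = clw a b (i : ℕ)) (h2 : clw a b (i : ℕ) = clw a b (j : ℕ)) :
    s ∈ blkM n a b i j := by
  unfold clw at h1 h2
  unfold blkM blkA blkB blkC
  split_ifs at h1 h2 ⊢ <;>
    first
      | (simp only [Finset.mem_filter, Finset.mem_univ, true_and]; omega)
      | omega

lemma Epos (a b c : ℕ) (hne : ¬(a = b ∧ b = c)) :
    (0 : ℤ) < 3 * (((a : ℤ) * a + b * b + c * c) - (a * b + a * c + b * c)) := by
  have h : a ≠ b ∨ b ≠ c := by tauto
  rcases h with h | h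
  · have hne' : (a : ℤ) - b ≠ 0 := by
      intro hz; apply h; omega
    have h1 : ((a : ℤ) - b) ^ 2 ≥ 1 := by
      rcases hne'.lt_or_gt with hl | hl <;> nlinarith
    nlinarith [sq_nonneg ((b : ℤ) - c), sq_nonneg ((a : ℤ) - c)]
  · have hne' : (b : ℤ) - c ≠ 0 := by
      intro hz; apply h; omega
    have h1 : ((b : ℤ) - c) ^ 2 ≥ 1 := by
      rcases hne'.lt_or_gt with hl | hl <;> nlinarith
    nlinarith [sq_nonneg ((a : ℤ) - b), sq_nonneg ((a : ℤ) - c)]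

set_option maxHeartbeats 1000000 in
/-- With n = a+b+c, a,b,c positive and not all equal, the block-diagonal array M
cannot be embedded in an (n², n−k)-array for any k ≥ 1: there is no
(n², n−k)-array P with M[i,j] ⊆ P[i,j] for all i, j. -/
theorem stmt_17 (a b c n : ℕ) (ha : 0 < a) (hb : 0 < b) (hc : 0 < c)
    (hne : ¬(a = b ∧ b = c)) (hn : n = a + b + c) (k : ℕ) (hk : 1 ≤ k) :
    ¬ ∃ P : Fin n → Fin n → Finset (Fin n),
        IsArray2 n (n - k) P ∧ ∀ i j : Fin n, blkM n a b i j ⊆ P i j := by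
  rintro ⟨P, ⟨hcard, hrow, hcol⟩, hsub⟩
  have huniv : (Finset.univ : Finset (Fin n)).card = n := by simp
  set k' : ℕ := n - (n - k) with hk'def
  have hk'1 : 1 ≤ k' := by omega
  -- complement cardinalities
  have hN : ∀ i j : Fin n, ((P i j)ᶜ : Finset (Fin n)).card = k' := by
    intro i j
    rw [Finset.card_compl, hcard i j]
    simp [hk'def]
  have hNrow : ∀ (i s : Fin n), (Finset.univ.filter fun j => s ∈ (P i j)ᶜ).card = k' := by
    intro i s
    have h1 := Finset.card_filter_add_card_filter_not
      (s := (Finset.univ : Finset (Fin n))) (p := fun j => s ∈ P i j)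
    have h2 := hrow i s
    have h3 : (Finset.univ.filter fun j => s ∈ (P i j)ᶜ)
        = (Finset.univ.filter fun j => ¬ s ∈ P i j) := by
      apply Finset.filter_congr; intro x _; simp
    rw [h3]
    omega
  have hNcol : ∀ (j s : Fin n), (Finset.univ.filter fun i => s ∈ (P i j)ᶜ).card = k' := by
    intro j s
    have h1 := Finset.card_filter_add_card_filter_not
      (s := (Finset.univ : Finset (Fin n))) (p := fun i => s ∈ P i j)
    have h2 := hcol j s
    have h3 : (Finset.univ.filter fun i => s ∈ (P i j)ᶜ)
        = (Finset.univ.filter fun i => ¬ s ∈ P i j) := by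
      apply Finset.filter_congr; intro x _; simp
    rw [h3]
    omega
  -- the big weighted sum
  set T : ℤ := ∑ i : Fin n, ∑ j : Fin n, ∑ s ∈ (P i j)ᶜ,
      (wU (clw a b (s : ℕ)) (clw a b (i : ℕ)) + wV (clw a b (s : ℕ)) (clw a b (j : ℕ))
        + wW (clw a b (i : ℕ)) (clw a b (j : ℕ))) with hT
  -- upper bound
  have hT_le : T ≤ 0 := by
    refine Finset.sum_nonpos fun i _ => Finset.sum_nonpos fun j _ =>
      Finset.sum_nonpos fun s hs => ?_
    apply wkey
    rintro ⟨e1, e2⟩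
    exact (Finset.mem_compl.1 hs) (hsub i j (blk_sub n a b i j s e1 e2))
  -- swapping lemmas
  have swap_row : ∀ (i : Fin n) (f : Fin n → ℤ),
      (∑ j : Fin n, ∑ s ∈ (P i j)ᶜ, f s) = ∑ s : Fin n, (k' : ℤ) * f s := by
    intro i f
    calc ∑ j : Fin n, ∑ s ∈ (P i j)ᶜ, f s
        = ∑ j : Fin n, ∑ s : Fin n, if s ∈ (P i j)ᶜ then f s else 0 := by
          refine Finset.sum_congr rfl fun j _ => ?_
          rw [← Finset.sum_filter, Finset.filter_univ_mem]
      _ = ∑ s : Fin n, ∑ j : Fin n, if s ∈ (P i j)ᶜ then f s else 0 := Finset.sum_comm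
      _ = ∑ s : Fin n, (k' : ℤ) * f s := by
          refine Finset.sum_congr rfl fun s _ => ?_
          rw [← Finset.sum_filter, Finset.sum_const, hNrow i s, nsmul_eq_mul]
  have swap_col : ∀ (j : Fin n) (f : Fin n → ℤ),
      (∑ i : Fin n, ∑ s ∈ (P i j)ᶜ, f s) = ∑ s : Fin n, (k' : ℤ) * f s := by
    intro j f
    calc ∑ i : Fin n, ∑ s ∈ (P i j)ᶜ, f s
        = ∑ i : Fin n, ∑ s : Fin n, if s ∈ (P i j)ᶜ then f s else 0 := by
          refine Finset.sum_congr rfl fun i _ => ?_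
          rw [← Finset.sum_filter, Finset.filter_univ_mem]
      _ = ∑ s : Fin n, ∑ i : Fin n, if s ∈ (P i j)ᶜ then f s else 0 := Finset.sum_comm
      _ = ∑ s : Fin n, (k' : ℤ) * f s := by
          refine Finset.sum_congr rfl fun s _ => ?_
          rw [← Finset.sum_filter, Finset.sum_const, hNcol j s, nsmul_eq_mul]
  -- split T into three parts
  have hsplit : T = (∑ i : Fin n, ∑ j : Fin n, ∑ s ∈ (P i j)ᶜ, wU (clw a b (s : ℕ)) (clw a b (i : ℕ)))
      + (∑ i : Fin n, ∑ j : Fin n, ∑ s ∈ (P i j)ᶜ, wV (clw a b (s : ℕ)) (clw a b (j : ℕ)))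
      + (∑ i : Fin n, ∑ j : Fin n, ∑ s ∈ (P i j)ᶜ, wW (clw a b (i : ℕ)) (clw a b (j : ℕ))) := by
    rw [hT, ← Finset.sum_add_distrib, ← Finset.sum_add_distrib]
    refine Finset.sum_congr rfl fun i _ => ?_
    rw [← Finset.sum_add_distrib, ← Finset.sum_add_distrib]
    refine Finset.sum_congr rfl fun j _ => ?_
    rw [← Finset.sum_add_distrib, ← Finset.sum_add_distrib]
  -- evaluate the three parts
  have hT1 : (∑ i : Fin n, ∑ j : Fin n, ∑ s ∈ (P i j)ᶜ, wU (clw a b (s : ℕ)) (clw a b (i : ℕ)))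
      = (k' : ℤ) * ∑ i : Fin n, ∑ s : Fin n, wU (clw a b (s : ℕ)) (clw a b (i : ℕ)) := by
    rw [Finset.mul_sum]
    refine Finset.sum_congr rfl fun i _ => ?_
    rw [swap_row i (fun s => wU (clw a b (s : ℕ)) (clw a b (i : ℕ))), Finset.mul_sum]
  have hT2 : (∑ i : Fin n, ∑ j : Fin n, ∑ s ∈ (P i j)ᶜ, wV (clw a b (s : ℕ)) (clw a b (j : ℕ)))
      = (k' : ℤ) * ∑ j : Fin n, ∑ s : Fin n, wV (clw a b (s : ℕ)) (clw a b (j : ℕ)) := by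
    rw [Finset.sum_comm, Finset.mul_sum]
    refine Finset.sum_congr rfl fun j _ => ?_
    rw [swap_col j (fun s => wV (clw a b (s : ℕ)) (clw a b (j : ℕ))), Finset.mul_sum]
  have hT3 : (∑ i : Fin n, ∑ j : Fin n, ∑ s ∈ (P i j)ᶜ, wW (clw a b (i : ℕ)) (clw a b (j : ℕ)))
      = (k' : ℤ) * ∑ i : Fin n, ∑ j : Fin n, wW (clw a b (i : ℕ)) (clw a b (j : ℕ)) := by
    rw [Finset.mul_sum]
    refine Finset.sum_congr rfl fun i _ => ?_
    rw [Finset.mul_sum]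
    refine Finset.sum_congr rfl fun j _ => ?_
    rw [Finset.sum_const, hN i j, nsmul_eq_mul]
  -- evaluate the class sums
  have hS1 : (∑ i : Fin n, ∑ s : Fin n, wU (clw a b (s : ℕ)) (clw a b (i : ℕ)))
      = ((a : ℤ) * a + b * b + c * c) - (a * b + a * c + b * c) := by
    have inner : ∀ i : Fin n, (∑ s : Fin n, wU (clw a b (s : ℕ)) (clw a b (i : ℕ)))
        = (a : ℤ) * wU 0 (clw a b (i : ℕ)) + (b : ℤ) * wU 1 (clw a b (i : ℕ))
          + (c : ℤ) * wU 2 (clw a b (i : ℕ)) :=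
      fun i => clsum a b c n hn (fun z => wU z (clw a b (i : ℕ)))
    rw [Finset.sum_congr rfl (fun i _ => inner i),
      clsum a b c n hn (fun x => (a : ℤ) * wU 0 x + (b : ℤ) * wU 1 x + (c : ℤ) * wU 2 x)]
    norm_num [wU]
    ring
  have hS2 : (∑ j : Fin n, ∑ s : Fin n, wV (clw a b (s : ℕ)) (clw a b (j : ℕ)))
      = ((a : ℤ) * a + b * b + c * c) - (a * b + a * c + b * c) := by
    have inner : ∀ j : Fin n, (∑ s : Fin n, wV (clw a b (s : ℕ)) (clw a b (j : ℕ)))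
        = (a : ℤ) * wV 0 (clw a b (j : ℕ)) + (b : ℤ) * wV 1 (clw a b (j : ℕ))
          + (c : ℤ) * wV 2 (clw a b (j : ℕ)) :=
      fun j => clsum a b c n hn (fun z => wV z (clw a b (j : ℕ)))
    rw [Finset.sum_congr rfl (fun j _ => inner j),
      clsum a b c n hn (fun y => (a : ℤ) * wV 0 y + (b : ℤ) * wV 1 y + (c : ℤ) * wV 2 y)]
    norm_num [wV]
    ring
  have hS3 : (∑ i : Fin n, ∑ j : Fin n, wW (clw a b (i : ℕ)) (clw a b (j : ℕ)))
      = ((a : ℤ) * a + b * b + c * c) - (a * b + a * c + b * c) := by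
    have inner : ∀ i : Fin n, (∑ j : Fin n, wW (clw a b (i : ℕ)) (clw a b (j : ℕ)))
        = (a : ℤ) * wW (clw a b (i : ℕ)) 0 + (b : ℤ) * wW (clw a b (i : ℕ)) 1
          + (c : ℤ) * wW (clw a b (i : ℕ)) 2 :=
      fun i => clsum a b c n hn (fun y => wW (clw a b (i : ℕ)) y)
    rw [Finset.sum_congr rfl (fun i _ => inner i),
      clsum a b c n hn (fun x => (a : ℤ) * wW x 0 + (b : ℤ) * wW x 1 + (c : ℤ) * wW x 2)]
    norm_num [wW]
    ring
  -- conclude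
  have hTval : T = (k' : ℤ) * (3 * (((a : ℤ) * a + b * b + c * c) - (a * b + a * c + b * c))) := by
    rw [hsplit, hT1, hT2, hT3, hS1, hS2, hS3]; ring
  have hEpos := Epos a b c hne
  have hk'pos : (0 : ℤ) < (k' : ℤ) := by exact_mod_cast hk'1
  have hpos : (0 : ℤ) < T := by
    rw [hTval]
    exact mul_pos hk'pos hEpos
  linarith
end
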